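/- Let c, C > 0 be real constants, δ ∈ (0, 1), γ > 0, and let N be a positive integer with (1 + γ)^N ≤ 2 and c ≥ 4C(1 − δ)^N. Let π : ℝ → ℝ be nonincreasing on (0, ∞) and satisfy c/t² ≤ π(t) ≤ C/t² for all t > 0. Then for every r > 0 there exists j ∈ {1, …, N} such that, setting r₀ := (1 + γ)^{j−1} r / 2, one has r/2 ≤ r₀ ≤ r and π((1 + γ) r₀) ≥ (1 − δ) π(r₀). -/

import Mathlib

theorem statement10 (c C δ γ : ℝ) (hc : 0 < c) (hC : 0 < C)
    (hδ0 : 0 < δ) (hδ1 : δ < 1) (hγ : 0 < γ)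
    (N : ℕ) (hN : 0 < N) (hpow : (1 + γ) ^ N ≤ 2) (hcC : 4 * C * (1 - δ) ^ N ≤ c)
    (π : ℝ → ℝ)
    (hmono : ∀ s t : ℝ, 0 < s → s ≤ t → π t ≤ π s)
    (hlow : ∀ t : ℝ, 0 < t → c / t ^ 2 ≤ π t)
    (hup : ∀ t : ℝ, 0 < t → π t ≤ C / t ^ 2) :
    ∀ r : ℝ, 0 < r → ∃ j : ℕ, 1 ≤ j ∧ j ≤ N ∧
      r / 2 ≤ (1 + γ) ^ (j - 1) * r / 2 ∧ (1 + γ) ^ (j - 1) * r / 2 ≤ r ∧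
      (1 - δ) * π ((1 + γ) ^ (j - 1) * r / 2) ≤
        π ((1 + γ) * ((1 + γ) ^ (j - 1) * r / 2)) := by
  intro r hr
  have h1γ : (1:ℝ) ≤ 1 + γ := by linarith
  have hposj : ∀ j : ℕ, 0 < (1 + γ) ^ j * r / 2 := by
    intro j
    have := pow_pos (by linarith : (0:ℝ) < 1 + γ) j
    positivity
  have hgej : ∀ j : ℕ, r / 2 ≤ (1 + γ) ^ j * r / 2 := by
    intro j
    have h1 : (1:ℝ) ≤ (1 + γ) ^ j := one_le_pow₀ h1γ
    nlinarith
  have hlej : ∀ j : ℕ, j ≤ N → (1 + γ) ^ j * r / 2 ≤ r := by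
    intro j hj
    have h2 : (1 + γ) ^ j ≤ 2 :=
      le_trans (pow_le_pow_right₀ (by linarith) hj) hpow
    nlinarith
  by_contra hcon
  push_neg at hcon
  have key : ∀ j : ℕ, 1 ≤ j → j ≤ N →
      π ((1 + γ) ^ j * r / 2) < (1 - δ) ^ j * π (r / 2) := by
    intro j hj
    induction j, hj using Nat.le_induction with
    | base =>
      intro hjN
      have := hcon 1 le_rfl hjN (by simpa using hgej 0) (by simpa using hlej 0 (by omega))
      simp only [pow_zero, one_mul, pow_one] at this ⊢
      simpa only [Nat.sub_self, pow_zero, one_mul, mul_div_assoc] using this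
    | succ n hn ih =>
      intro hjN
      have ih' := ih (by omega)
      have hstep := hcon (n + 1) (by omega) hjN
        (by simpa using hgej n) (by simpa using hlej n (by omega))
      simp only [Nat.add_sub_cancel] at hstep
      have heq : (1 + γ) * ((1 + γ) ^ n * r / 2) = (1 + γ) ^ (n + 1) * r / 2 := by
        ring
      rw [heq] at hstep
      have hδpos : 0 < 1 - δ := by linarith
      calc π ((1 + γ) ^ (n + 1) * r / 2) < (1 - δ) * π ((1 + γ) ^ n * r / 2) := hstep
        _ < (1 - δ) * ((1 - δ) ^ n * π (r / 2)) := by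
            exact mul_lt_mul_of_pos_left ih' hδpos
        _ = (1 - δ) ^ (n + 1) * π (r / 2) := by ring
  have hkN := key N hN le_rfl
  have hπr2 : π (r / 2) ≤ C / (r / 2) ^ 2 := hup _ (by positivity)
  have hδN : (0:ℝ) < (1 - δ) ^ N := pow_pos (by linarith) N
  have hub : (1 - δ) ^ N * π (r / 2) ≤ (1 - δ) ^ N * (C / (r / 2) ^ 2) :=
    mul_le_mul_of_nonneg_left hπr2 hδN.le
  have heq2 : (1 - δ) ^ N * (C / (r / 2) ^ 2) = 4 * C * (1 - δ) ^ N / r ^ 2 := by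
    field_simp
    ring
  have hlb : c / r ^ 2 ≤ π ((1 + γ) ^ N * r / 2) := by
    calc c / r ^ 2 ≤ π r := hlow r hr
      _ ≤ π ((1 + γ) ^ N * r / 2) := hmono _ _ (hposj N) (hlej N le_rfl)
  have hcc : 4 * C * (1 - δ) ^ N / r ^ 2 ≤ c / r ^ 2 :=
    div_le_div_of_nonneg_right hcC (by positivity)
  linarith [hkN, hub, heq2 ▸ hub]
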